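/- arXiv:0902.3289 — 5 statements merged into one kernel-verified Lean document; each statement's English description precedes it below -/
import Mathlib

section
/- Let R be an associative unital ring in which 2 is invertible. Let J₀, H ∈ R satisfy J₀² = −1, H·J₀ + J₀·H = 0, and assume 1 + H is a unit. Set J := (1 + H)·J₀·(1 + H)⁻¹. Then J² = −1, J + J₀ is a unit, and (J − J₀)·(J + J₀)⁻¹ = H. (This is the Abresch–Fischer chart for almost complex structures: the map H ↦ (1+H)J₀(1+H)⁻¹ from elements anticommuting with J₀ with 1+H invertible into the set {J : J² = −1} is injective, with inverse J ↦ (J − J₀)(J + J₀)⁻¹.) -/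
/-- **Abresch–Fischer chart.** In an associative unital ring `R` with `2` invertible, if
`J₀² = -1`, `H` anticommutes with `J₀` and `1 + H` is a unit, then
`J := (1 + H) * J₀ * (1 + H)⁻¹` satisfies `J² = -1`, `J + J₀` is a unit, and
`(J - J₀) * (J + J₀)⁻¹ = H`. -/
theorem abresch_fischer_chart {R : Type*} [Ring R] (h2 : IsUnit (2 : R))
    (J₀ H : R) (hJ₀ : J₀ ^ 2 = -1) (hanti : H * J₀ + J₀ * H = 0)
    (hH : IsUnit (1 + H)) :
    ((1 + H) * J₀ * Ring.inverse (1 + H)) ^ 2 = -1 ∧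
    IsUnit ((1 + H) * J₀ * Ring.inverse (1 + H) + J₀) ∧
    ((1 + H) * J₀ * Ring.inverse (1 + H) - J₀) *
        Ring.inverse ((1 + H) * J₀ * Ring.inverse (1 + H) + J₀) = H := by
  obtain ⟨u, hu⟩ := hH
  have hv : Ring.inverse (1 + H) = (↑u⁻¹ : R) := by rw [← hu, Ring.inverse_unit]
  set v : R := (↑u⁻¹ : R) with hvdef
  have h1 : (1 + H) * v = 1 := by rw [← hu]; exact u.mul_inv
  have h1' : v * (1 + H) = 1 := by rw [← hu]; exact u.inv_mul
  have hJJ : J₀ * J₀ = -1 := by rw [← sq]; exact hJ₀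
  have hanti' : J₀ * H = -(H * J₀) := eq_neg_of_add_eq_zero_right hanti
  -- J₀ is a unit
  have huJ : J₀ * (-J₀) = 1 := by rw [mul_neg, hJJ, neg_neg]
  have huJ' : (-J₀) * J₀ = 1 := by rw [neg_mul, hJJ, neg_neg]
  set uJ₀ : Rˣ := ⟨J₀, -J₀, huJ, huJ'⟩ with huJdef
  -- half
  set c : R := (↑h2.unit⁻¹ : R) with hcdef
  have h2c : (2 : R) * c = 1 := by
    have := h2.unit.mul_inv; rwa [IsUnit.unit_spec] at this
  have hc2 : c * (2 : R) = 1 := by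
    have := h2.unit.inv_mul; rwa [IsUnit.unit_spec] at this
  have hc_comm : ∀ x : R, c * x = x * c := by
    intro x
    calc c * x = (c * x) * ((2 : R) * c) := by rw [h2c, mul_one]
      _ = c * (x * 2) * c := by noncomm_ring
      _ = c * (2 * x) * c := by rw [mul_two, two_mul]
      _ = (c * 2) * (x * c) := by noncomm_ring
      _ = x * c := by rw [hc2, one_mul]
  -- J + J₀ = 2 * J₀ * v
  have key : (1 + H) * J₀ + J₀ * (1 + H) = 2 * J₀ + (H * J₀ + J₀ * H) := by noncomm_ring
  have hsum : (1 + H) * J₀ * v + J₀ = 2 * J₀ * v := by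
    calc (1 + H) * J₀ * v + J₀ = (1 + H) * J₀ * v + J₀ * ((1 + H) * v) := by
          rw [h1, mul_one]
      _ = ((1 + H) * J₀ + J₀ * (1 + H)) * v := by noncomm_ring
      _ = 2 * J₀ * v := by rw [key, hanti, add_zero]
  -- J - J₀ = 2 * (H * J₀) * v
  have key2 : (1 + H) * J₀ - J₀ * (1 + H) = 2 * (H * J₀) - (H * J₀ + J₀ * H) := by
    noncomm_ring
  have hdiff : (1 + H) * J₀ * v - J₀ = 2 * (H * J₀) * v := by
    calc (1 + H) * J₀ * v - J₀ = (1 + H) * J₀ * v - J₀ * ((1 + H) * v) := by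
          rw [h1, mul_one]
      _ = ((1 + H) * J₀ - J₀ * (1 + H)) * v := by noncomm_ring
      _ = 2 * (H * J₀) * v := by rw [key2, hanti, sub_zero]
  -- the unit w with ↑w = 2 * J₀ * v
  set w : Rˣ := h2.unit * uJ₀ * u⁻¹ with hwdef
  have hw : (↑w : R) = 2 * J₀ * v := by
    simp [hwdef, huJdef, IsUnit.unit_spec, hvdef]
  have hwinv : (↑w⁻¹ : R) = (1 + H) * (-J₀) * c := by
    rw [hwdef, mul_inv_rev, mul_inv_rev, inv_inv]
    simp only [Units.val_mul, hu]
    rw [show ((uJ₀⁻¹ : Rˣ) : R) = -J₀ from rfl, ← hcdef, mul_assoc]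
  refine ⟨?_, ?_, ?_⟩
  · rw [hv, sq]
    calc (1 + H) * J₀ * v * ((1 + H) * J₀ * v)
        = (1 + H) * ((J₀ * (v * (1 + H))) * (J₀ * v)) := by noncomm_ring
      _ = (1 + H) * (J₀ * J₀) * v := by rw [h1', mul_one]; noncomm_ring
      _ = -((1 + H) * v) := by rw [hJJ]; noncomm_ring
      _ = -1 := by rw [h1]
  · rw [hv, hsum, ← hw]; exact w.isUnit
  · rw [hv, hdiff, hsum, ← hw, Ring.inverse_unit, hwinv]
    calc 2 * (H * J₀) * v * ((1 + H) * (-J₀) * c)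
        = 2 * (H * J₀) * ((v * (1 + H)) * ((-J₀) * c)) := by noncomm_ring
      _ = 2 * ((H * (J₀ * (-J₀))) * c) := by rw [h1', one_mul]; noncomm_ring
      _ = 2 * (c * H) := by rw [huJ, mul_one, ← hc_comm]
      _ = H := by rw [← mul_assoc, h2c, one_mul]
end

section
/- Let R be an associative unital ring in which 2 is invertible, and let J₀, H, K ∈ R satisfy J₀² = −1, H·J₀ + J₀·H = 0, K·J₀ + J₀·K = 0, with 1 + H a unit. Set J := (1 + H)·J₀·(1 + H)⁻¹ (so J + J₀ = 2J₀(1+H)⁻¹ is a unit). Then (1 − H) · ( J · ( (K·J₀ − J·K) · (1 + H)⁻¹ ) ) · (J + J₀)⁻¹ = J₀·K. (In the paper's notation: with Dψ(H)K := (KJ₀ − JK)(1+H)⁻¹ the derivative of the Abresch–Fischer chart and Dψ⁻¹(J)L := (1−H)L(J+J₀)⁻¹ the derivative of its inverse, one has Dψ⁻¹(J)(J · Dψ(H)K) = J₀·K, i.e. the chart derivative intertwines left multiplication by J with left multiplication by J₀.) -/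
/-- The computational core of the holomorphy of the Abresch–Fischer charts: with
`J := (1 + H) * J₀ * (1 + H)⁻¹`, `Dψ(H)K = (K*J₀ - J*K) * (1 + H)⁻¹` and
`Dψ⁻¹(J)L = (1 - H) * L * (J + J₀)⁻¹`, one has `Dψ⁻¹(J)(J · Dψ(H)K) = J₀ * K`. -/
theorem abresch_fischer_holomorphic {R : Type*} [Ring R] (h2 : IsUnit (2 : R))
    (J₀ H Kt : R) (hJ₀ : J₀ ^ 2 = -1) (hH : H * J₀ + J₀ * H = 0)
    (hK : Kt * J₀ + J₀ * Kt = 0) (hu : IsUnit (1 + H)) :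
    (1 - H) *
        (((1 + H) * J₀ * Ring.inverse (1 + H)) *
          ((Kt * J₀ - ((1 + H) * J₀ * Ring.inverse (1 + H)) * Kt) * Ring.inverse (1 + H))) *
        Ring.inverse (((1 + H) * J₀ * Ring.inverse (1 + H)) + J₀) = J₀ * Kt := by
  set v := Ring.inverse (1 + H) with hvdef
  set i2 := Ring.inverse (2 : R) with hi2def
  have hv1 : (1 + H) * v = 1 := Ring.mul_inverse_cancel _ hu
  have hv2 : v * (1 + H) = 1 := Ring.inverse_mul_cancel _ hu
  have h2i : (2 : R) * i2 = 1 := Ring.mul_inverse_cancel _ h2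
  have hi2 : i2 * (2 : R) = 1 := Ring.inverse_mul_cancel _ h2
  have hJJ : J₀ * J₀ = -1 := by rw [← pow_two J₀]; exact hJ₀
  have hHJ : H * J₀ = -(J₀ * H) := eq_neg_of_add_eq_zero_left hH
  have hKJ : Kt * J₀ = -(J₀ * Kt) := eq_neg_of_add_eq_zero_left hK
  have hA : J₀ * (1 + H) = (1 - H) * J₀ := by
    calc J₀ * (1 + H) = J₀ - -(J₀ * H) := by noncomm_ring
      _ = J₀ - H * J₀ := by rw [hHJ]
      _ = (1 - H) * J₀ := by noncomm_ring
  have hB : (1 + H) * J₀ = J₀ * (1 - H) := by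
    calc (1 + H) * J₀ = J₀ + (-(J₀ * H)) := by rw [← hHJ]; noncomm_ring
      _ = J₀ * (1 - H) := by noncomm_ring
  have h2c : ∀ x : R, 2 * x = x * 2 := fun x => by rw [two_mul, mul_two]
  -- the sum J + J₀ equals (2 * J₀) * v
  have hS : (1 + H) * J₀ * v + J₀ = (2 * J₀) * v := by
    calc (1 + H) * J₀ * v + J₀ = (1 + H) * J₀ * v + J₀ * ((1 + H) * v) := by
          rw [hv1, mul_one]
      _ = ((1 + H) * J₀ + J₀ * (1 + H)) * v := by noncomm_ring
      _ = (J₀ * (1 - H) + J₀ * (1 + H)) * v := by rw [hB]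
      _ = (2 * J₀) * v := by noncomm_ring
  -- the inverse of J + J₀
  have hinvS : Ring.inverse ((1 + H) * J₀ * v + J₀) = (1 + H) * J₀ * (-(i2)) := by
    have hfwd : ((1 + H) * J₀ * v + J₀) * ((1 + H) * J₀ * (-(i2))) = 1 := by
      rw [hS]
      calc (2 * J₀) * v * ((1 + H) * J₀ * (-(i2)))
          = 2 * J₀ * (v * (1 + H)) * (J₀ * (-(i2))) := by noncomm_ring
        _ = 2 * J₀ * 1 * (J₀ * (-(i2))) := by rw [hv2]
        _ = -(2 * (J₀ * J₀) * i2) := by noncomm_ring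
        _ = -(2 * (-1 : R) * i2) := by rw [hJJ]
        _ = 2 * i2 := by noncomm_ring
        _ = 1 := h2i
    have hbwd : ((1 + H) * J₀ * (-(i2))) * ((1 + H) * J₀ * v + J₀) = 1 := by
      rw [hS]
      calc ((1 + H) * J₀ * (-(i2))) * ((2 * J₀) * v)
          = -((1 + H) * J₀ * ((i2 * 2) * (J₀ * v))) := by noncomm_ring
        _ = -((1 + H) * J₀ * ((1 : R) * (J₀ * v))) := by rw [hi2]
        _ = -((1 + H) * ((J₀ * J₀) * v)) := by noncomm_ring
        _ = -((1 + H) * ((-1 : R) * v)) := by rw [hJJ]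
        _ = (1 + H) * v := by noncomm_ring
        _ = 1 := hv1
    exact Ring.inverse_unit ⟨_, _, hfwd, hbwd⟩
  rw [hinvS]
  -- intermediate identities
  have h1 : (1 - H) * ((1 + H) * J₀ * v) = (1 + H) * J₀ := by
    calc (1 - H) * ((1 + H) * J₀ * v) = (1 + H) * ((1 - H) * J₀) * v := by noncomm_ring
      _ = (1 + H) * (J₀ * (1 + H)) * v := by rw [hA]
      _ = (1 + H) * J₀ * ((1 + H) * v) := by noncomm_ring
      _ = (1 + H) * J₀ := by rw [hv1, mul_one]
  have h2a : (1 + H) * J₀ * (Kt * J₀) = (1 + H) * Kt := by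
    calc (1 + H) * J₀ * (Kt * J₀) = (1 + H) * J₀ * (-(J₀ * Kt)) := by rw [hKJ]
      _ = -((1 + H) * ((J₀ * J₀) * Kt)) := by noncomm_ring
      _ = -((1 + H) * ((-1 : R) * Kt)) := by rw [hJJ]
      _ = (1 + H) * Kt := by noncomm_ring
  have h2b : (1 + H) * J₀ * ((1 + H) * J₀ * v) = -(1 - H) := by
    calc (1 + H) * J₀ * ((1 + H) * J₀ * v)
        = (1 + H) * (J₀ * (1 + H)) * (J₀ * v) := by noncomm_ring
      _ = (1 + H) * ((1 - H) * J₀) * (J₀ * v) := by rw [hA]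
      _ = (1 - H) * (1 + H) * (J₀ * J₀) * v := by noncomm_ring
      _ = (1 - H) * (1 + H) * (-1 : R) * v := by rw [hJJ]
      _ = -((1 - H) * ((1 + H) * v)) := by noncomm_ring
      _ = -(1 - H) := by rw [hv1, mul_one]
  have hmid : ((1 + H) * J₀) * ((Kt * J₀ - ((1 + H) * J₀ * v) * Kt) * v) = (2 * Kt) * v := by
    calc ((1 + H) * J₀) * ((Kt * J₀ - ((1 + H) * J₀ * v) * Kt) * v)
        = ((1 + H) * J₀ * (Kt * J₀)) * v - ((1 + H) * J₀ * ((1 + H) * J₀ * v)) * (Kt * v) := by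
          noncomm_ring
      _ = ((1 + H) * Kt) * v - (-(1 - H)) * (Kt * v) := by rw [h2a, h2b]
      _ = (2 * Kt) * v := by noncomm_ring
  calc (1 - H) * (((1 + H) * J₀ * v) *
          ((Kt * J₀ - ((1 + H) * J₀ * v) * Kt) * v)) * ((1 + H) * J₀ * (-(i2)))
      = ((1 - H) * ((1 + H) * J₀ * v)) *
          ((Kt * J₀ - ((1 + H) * J₀ * v) * Kt) * v) * ((1 + H) * J₀ * (-(i2))) := by
        noncomm_ring
    _ = (((1 + H) * J₀) * ((Kt * J₀ - ((1 + H) * J₀ * v) * Kt) * v)) *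
          ((1 + H) * J₀ * (-(i2))) := by rw [h1]
    _ = ((2 * Kt) * v) * ((1 + H) * J₀ * (-(i2))) := by rw [hmid]
    _ = 2 * (Kt * ((v * (1 + H)) * (J₀ * (-(i2))))) := by noncomm_ring
    _ = 2 * (Kt * ((1 : R) * (J₀ * (-(i2))))) := by rw [hv2]
    _ = -(2 * ((Kt * J₀) * i2)) := by noncomm_ring
    _ = -(2 * ((-(J₀ * Kt)) * i2)) := by rw [hKJ]
    _ = (2 * (J₀ * Kt)) * i2 := by noncomm_ring
    _ = (J₀ * Kt) * (2 * i2) := by rw [h2c (J₀ * Kt), mul_assoc]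
    _ = J₀ * Kt := by rw [h2i, mul_one]
end

section
/- Let R be a commutative ring, A an associative R-algebra, and d₁, …, dₙ R-linear derivations of A. For a permutation σ of {1, …, n} write D_σ := d_{σ(1)} ∘ ⋯ ∘ d_{σ(n)} (composition of R-linear endomorphisms of A), and for a subset S ⊆ {1, …, n} write Σ_S(f) := Σ over all bijections e : {1, …, |S|} → S of (d_{e(1)} ∘ ⋯ ∘ d_{e(|S|)})(f), with Σ_∅(f) = f. Then for all f, g ∈ A: Σ_{σ ∈ Sₙ} D_σ(f·g) = Σ_{S ⊆ {1, …, n}} binom(n, |S|) · Σ_S(f) · Σ_{Sᶜ}(g). Equivalently, if A is a ℚ-algebra and 𝔖(d_{i_1}, …, d_{i_k}) := (1/k!) Σ over all orderings of the composite denotes symmetrization, then 𝔖(d₁, …, dₙ)(f·g) = Σ_{S ⊆ {1, …, n}} 𝔖(d_S)(f) · 𝔖(d_{Sᶜ})(g). -/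
open Finset

section symAux
variable {ι : Type*} [DecidableEq ι]

/-- The orderings of a finset, as a finset of lists. -/
noncomputable def symOrds (T : Finset ι) : Finset (List ι) := T.val.toList.permutations.toFinset

lemma mem_symOrds {T : Finset ι} {l : List ι} :
    l ∈ symOrds T ↔ l.Nodup ∧ l.toFinset = T := by
  have hn : T.val.toList.Nodup := by
    have := T.nodup
    rwa [← Multiset.coe_toList T.val, Multiset.coe_nodup] at this
  have htf : T.val.toList.toFinset = T := by
    ext x
    simp [List.mem_toFinset, Multiset.mem_toList, ← Finset.mem_def]
  rw [symOrds, List.mem_toFinset, List.mem_permutations]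
  constructor
  · intro h
    exact ⟨h.nodup_iff.2 hn, (List.toFinset_eq_of_perm _ _ h).trans htf⟩
  · rintro ⟨h1, h2⟩
    exact List.perm_of_nodup_nodup_toFinset_eq h1 hn (h2.trans htf.symm)

lemma symOrds_empty : symOrds (∅ : Finset ι) = {[]} := by
  ext l
  simp only [mem_symOrds, Finset.mem_singleton]
  constructor
  · rintro ⟨-, h⟩
    simpa using h
  · rintro rfl
    simp

lemma symOrds_cons_mem {T : Finset ι} {k : ι} {l : List ι} (hk : k ∈ T)
    (hl : l ∈ symOrds (T.erase k)) : k :: l ∈ symOrds T := by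
  rw [mem_symOrds] at hl ⊢
  obtain ⟨h1, h2⟩ := hl
  have hkl : k ∉ l := by
    intro h
    have : k ∈ T.erase k := h2 ▸ List.mem_toFinset.2 h
    simp at this
  refine ⟨List.nodup_cons.2 ⟨hkl, h1⟩, ?_⟩
  rw [List.toFinset_cons, h2, Finset.insert_erase hk]

lemma symOrds_sum_succ {M : Type*} [AddCommMonoid M] {T : Finset ι} (hT : T.Nonempty)
    (F : List ι → M) :
    ∑ l ∈ symOrds T, F l = ∑ k ∈ T, ∑ l ∈ symOrds (T.erase k), F (k :: l) := by
  classical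
  rw [Finset.sum_sigma']
  refine (Finset.sum_nbij'
    (i := fun l => (⟨(l.headD hT.choose : ι), l.tail⟩ : Σ _ : ι, List ι))
    (j := fun x => x.1 :: x.2) ?_ ?_ ?_ ?_ ?_).symm.symm
  · intro l hl
    have hl' := mem_symOrds.1 hl
    obtain ⟨h1, h2⟩ := hl'
    cases l with
    | nil => exact absurd h2.symm (by simpa using hT.ne_empty)
    | cons a l' =>
      rw [Finset.mem_sigma]
      have ha : a ∈ T := h2 ▸ List.mem_toFinset.2 (List.mem_cons_self (a := a) (l := l'))
      refine ⟨ha, mem_symOrds.2 ⟨(List.nodup_cons.1 h1).2, ?_⟩⟩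
      show l'.toFinset = T.erase a
      rw [← h2, List.toFinset_cons, Finset.erase_insert
        (by simpa using (List.nodup_cons.1 h1).1)]
  · intro x hx
    rw [Finset.mem_sigma] at hx
    exact symOrds_cons_mem hx.1 hx.2
  · intro l hl
    have hl' := mem_symOrds.1 hl
    cases l with
    | nil => exact absurd hl'.2.symm (by simpa using hT.ne_empty)
    | cons a l' => rfl
  · intro x _
    rfl
  · intro l hl
    have hl' := mem_symOrds.1 hl
    cases l with
    | nil => exact absurd hl'.2.symm (by simpa using hT.ne_empty)
    | cons a l' => rfl
end symAux

section symAlg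
variable {R A : Type*} [CommRing R] [Ring A] [Algebra R A]
variable {ι : Type*} [DecidableEq ι] (d : ι → Module.End R A)

/-- Composite of the derivations indexed by a list. -/
noncomputable def symP (l : List ι) : Module.End R A := (l.map d).prod

/-- Sum of composites over all orderings of a finset. -/
noncomputable def symFF (T : Finset ι) : Module.End R A := ∑ l ∈ symOrds T, symP d l

lemma symP_cons (k : ι) (l : List ι) (h : A) : symP d (k :: l) h = d k (symP d l h) := by
  rw [symP, List.map_cons, List.prod_cons, Module.End.mul_apply]; rfl

lemma symFF_apply (T : Finset ι) (h : A) : symFF d T h = ∑ l ∈ symOrds T, symP d l h := by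
  rw [symFF, LinearMap.sum_apply]

lemma symFF_empty_apply (h : A) : symFF d ∅ h = h := by
  rw [symFF_apply, symOrds_empty, Finset.sum_singleton]
  simp [symP]

lemma symFF_decomp {T : Finset ι} (hT : T.Nonempty) (h : A) :
    symFF d T h = ∑ k ∈ T, d k (symFF d (T.erase k) h) := by
  rw [symFF_apply, symOrds_sum_succ hT]
  refine Finset.sum_congr rfl fun k _ => ?_
  rw [symFF_apply, map_sum]
  exact Finset.sum_congr rfl fun l _ => symP_cons d k l h
end symAlg

lemma symOfFn_get_cast {α : Type*} (l : List α) {m : ℕ} (h : m = l.length) :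
    List.ofFn (fun j : Fin m => l.get (Fin.cast h j)) = l := by
  subst h
  exact List.ofFn_get l

lemma sum_perm_symOrds {M : Type*} [AddCommMonoid M] (n : ℕ) (F : List (Fin n) → M) :
    ∑ σ : Equiv.Perm (Fin n), F (List.ofFn σ) =
      ∑ l ∈ symOrds (Finset.univ : Finset (Fin n)), F l := by
  refine Finset.sum_nbij (i := fun σ => List.ofFn σ) ?_ ?_ ?_ ?_
  · intro σ _
    refine mem_symOrds.2 ⟨List.nodup_ofFn.2 σ.injective, ?_⟩
    ext x
    simp only [List.mem_toFinset, List.mem_ofFn, Set.mem_range, Finset.mem_univ, iff_true]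
    exact ⟨σ.symm x, σ.apply_symm_apply x⟩
  · intro σ _ σ' _ h
    exact Equiv.coe_fn_injective (List.ofFn_inj.1 h)
  · intro l hl
    obtain ⟨h1, h2⟩ := mem_symOrds.1 hl
    have hlen : n = l.length := by
      rw [← List.toFinset_card_of_nodup h1, h2, Finset.card_fin]
    have hinj : Function.Injective (fun j : Fin n => l.get (Fin.cast hlen j)) :=
      (List.nodup_iff_injective_get.1 h1).comp fun a b hab => by
        simpa [Fin.ext_iff] using hab
    refine ⟨Equiv.ofBijective _ (Finite.injective_iff_bijective.1 hinj), Finset.mem_univ _, ?_⟩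
    exact symOfFn_get_cast l hlen
  · intro σ _
    rfl

lemma sum_equiv_symOrds {M : Type*} [AddCommMonoid M] {ι : Type*} [DecidableEq ι]
    (S : Finset ι) (F : List ι → M) :
    ∑ e : Fin S.card ≃ {x // x ∈ S}, F (List.ofFn fun j => (e j).val) =
      ∑ l ∈ symOrds S, F l := by
  refine Finset.sum_nbij (i := fun e => List.ofFn fun j => ((e : Fin S.card ≃ {x // x ∈ S}) j).val)
    ?_ ?_ ?_ ?_
  · intro e _
    refine mem_symOrds.2 ⟨List.nodup_ofFn.2 (Subtype.val_injective.comp e.injective), ?_⟩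
    ext x
    simp only [List.mem_toFinset, List.mem_ofFn, Set.mem_range]
    constructor
    · rintro ⟨j, rfl⟩
      exact (e j).2
    · intro hx
      exact ⟨e.symm ⟨x, hx⟩, by simp⟩
  · intro e _ e' _ h
    have := List.ofFn_inj.1 h
    refine Equiv.coe_fn_injective (funext fun j => Subtype.ext ?_)
    exact congrFun this j
  · intro l hl
    obtain ⟨h1, h2⟩ := mem_symOrds.1 hl
    have hlen : S.card = l.length := by
      rw [← h2]; exact List.toFinset_card_of_nodup h1
    have hmem : ∀ j : Fin S.card, l.get (Fin.cast hlen j) ∈ S := fun j =>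
      h2 ▸ List.mem_toFinset.2 (by rw [List.get_eq_getElem]; exact List.getElem_mem _)
    have hinj : Function.Injective (fun j : Fin S.card =>
        (⟨l.get (Fin.cast hlen j), hmem j⟩ : {x // x ∈ S})) := by
      intro a b hab
      have := (List.nodup_iff_injective_get.1 h1) (congrArg Subtype.val hab)
      simpa [Fin.ext_iff] using this
    have hbij : Function.Bijective (fun j : Fin S.card =>
        (⟨l.get (Fin.cast hlen j), hmem j⟩ : {x // x ∈ S})) := by
      rw [Fintype.bijective_iff_injective_and_card]
      exact ⟨hinj, by simp [Fintype.card_coe]⟩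
    refine ⟨Equiv.ofBijective _ hbij, Finset.mem_univ _, ?_⟩
    exact symOfFn_get_cast l hlen
  · intro e _
    rfl

lemma symErase_sdiff {ι : Type*} [DecidableEq ι] (T S : Finset ι) (k : ι) : T.erase k \ S = T \ insert k S := by
  ext x
  simp only [Finset.mem_sdiff, Finset.mem_erase, Finset.mem_insert]
  tauto

lemma symErase_sdiff' {ι : Type*} [DecidableEq ι] (T S : Finset ι) (k : ι) : T.erase k \ S = (T \ S).erase k := by
  ext x
  simp only [Finset.mem_sdiff, Finset.mem_erase]
  tauto

lemma symmetrized_leibniz_aux {R A : Type*} [CommRing R] [Ring A] [Algebra R A]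
    {ι : Type*} [DecidableEq ι] (d : ι → Module.End R A)
    (hd : ∀ i, ∀ a b : A, d i (a * b) = d i a * b + a * d i b) (f g : A) :
    ∀ (m : ℕ) (T : Finset ι), T.card = m →
      symFF d T (f * g) =
        ∑ S ∈ T.powerset, (m.choose S.card) • (symFF d S f * symFF d (T \ S) g) := by
  intro m
  induction m with
  | zero =>
    intro T hT
    rw [Finset.card_eq_zero] at hT
    subst hT
    simp [symFF_empty_apply, Finset.powerset_empty]
  | succ m IH =>
    intro T hT
    have hT0 : T.Nonempty := Finset.card_pos.1 (by omega)
    rw [symFF_decomp d hT0]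
    have key : ∀ k ∈ T, d k (symFF d (T.erase k) (f * g)) =
        (∑ S ∈ (T.erase k).powerset,
          (m.choose S.card) • (d k (symFF d S f) * symFF d (T.erase k \ S) g))
        + (∑ S ∈ (T.erase k).powerset,
          (m.choose S.card) • (symFF d S f * d k (symFF d (T.erase k \ S) g))) := by
      intro k hk
      rw [IH (T.erase k) (by rw [Finset.card_erase_of_mem hk, hT]; omega), map_sum,
        ← Finset.sum_add_distrib]
      refine Finset.sum_congr rfl fun S hS => ?_
      rw [map_nsmul, hd k, smul_add]
    rw [Finset.sum_congr rfl key, Finset.sum_add_distrib]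
    have hA : (∑ k ∈ T, ∑ S ∈ (T.erase k).powerset,
          (m.choose S.card) • (d k (symFF d S f) * symFF d (T.erase k \ S) g))
        = ∑ S ∈ T.powerset, ∑ k ∈ S,
          (m.choose (S.erase k).card) • (d k (symFF d (S.erase k) f) * symFF d (T \ S) g) := by
      rw [Finset.sum_sigma', Finset.sum_sigma']
      refine Finset.sum_nbij' (i := fun x => (⟨insert x.1 x.2, x.1⟩ : Σ _ : Finset ι, ι))
        (j := fun x => (⟨x.2, x.1.erase x.2⟩ : Σ _ : ι, Finset ι)) ?_ ?_ ?_ ?_ ?_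
      · rintro ⟨k, S⟩ hx
        rw [Finset.mem_sigma, Finset.mem_powerset] at hx
        exact Finset.mem_sigma.2 ⟨Finset.mem_powerset.2
          (Finset.insert_subset hx.1 (hx.2.trans (Finset.erase_subset _ _))),
          Finset.mem_insert_self _ _⟩
      · rintro ⟨S, k⟩ hy
        rw [Finset.mem_sigma, Finset.mem_powerset] at hy
        exact Finset.mem_sigma.2 ⟨hy.1 hy.2, Finset.mem_powerset.2 (Finset.erase_subset_erase _ hy.1)⟩
      · rintro ⟨k, S⟩ hx
        rw [Finset.mem_sigma, Finset.mem_powerset] at hx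
        have hkS : k ∉ S := fun h => (Finset.mem_erase.1 (hx.2 h)).1 rfl
        exact congrArg (fun s => (⟨k, s⟩ : Σ _ : ι, Finset ι)) (Finset.erase_insert hkS)
      · rintro ⟨S, k⟩ hy
        rw [Finset.mem_sigma] at hy
        exact congrArg (fun s => (⟨s, k⟩ : Σ _ : Finset ι, ι)) (Finset.insert_erase hy.2)
      · rintro ⟨k, S⟩ hx
        rw [Finset.mem_sigma, Finset.mem_powerset] at hx
        have hkS : k ∉ S := fun h => (Finset.mem_erase.1 (hx.2 h)).1 rfl
        simp only
        rw [Finset.erase_insert hkS, symErase_sdiff]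
    have hB : (∑ k ∈ T, ∑ S ∈ (T.erase k).powerset,
          (m.choose S.card) • (symFF d S f * d k (symFF d (T.erase k \ S) g)))
        = ∑ S ∈ T.powerset, ∑ k ∈ T \ S,
          (m.choose S.card) • (symFF d S f * d k (symFF d ((T \ S).erase k) g)) := by
      rw [Finset.sum_sigma', Finset.sum_sigma']
      refine Finset.sum_nbij' (i := fun x => (⟨x.2, x.1⟩ : Σ _ : Finset ι, ι))
        (j := fun x => (⟨x.2, x.1⟩ : Σ _ : ι, Finset ι)) ?_ ?_ ?_ ?_ ?_
      · rintro ⟨k, S⟩ hx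
        rw [Finset.mem_sigma, Finset.mem_powerset] at hx
        have hkS : k ∉ S := fun h => (Finset.mem_erase.1 (hx.2 h)).1 rfl
        exact Finset.mem_sigma.2 ⟨Finset.mem_powerset.2 (hx.2.trans (Finset.erase_subset _ _)),
          Finset.mem_sdiff.2 ⟨hx.1, hkS⟩⟩
      · rintro ⟨S, k⟩ hy
        rw [Finset.mem_sigma, Finset.mem_powerset] at hy
        have := Finset.mem_sdiff.1 hy.2
        exact Finset.mem_sigma.2 ⟨this.1, Finset.mem_powerset.2 (Finset.subset_erase.2 ⟨hy.1, this.2⟩)⟩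
      · rintro ⟨k, S⟩ _
        rfl
      · rintro ⟨S, k⟩ _
        rfl
      · rintro ⟨k, S⟩ _
        simp only
        rw [symErase_sdiff']
    rw [hA, hB, ← Finset.sum_add_distrib]
    refine Finset.sum_congr rfl fun S hS => ?_
    have hST : S ⊆ T := Finset.mem_powerset.1 hS
    by_cases hSe : S = ∅
    · subst hSe
      simp only [Finset.sum_empty, zero_add, Finset.sdiff_empty, Finset.card_empty,
        Nat.choose_zero_right, one_nsmul]
      rw [← Finset.mul_sum, ← symFF_decomp d hT0]
    · have hSne : S.Nonempty := Finset.nonempty_iff_ne_empty.2 hSe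
      obtain ⟨c, hc⟩ := Nat.exists_eq_succ_of_ne_zero
        (fun h => hSe (Finset.card_eq_zero.1 h))
      have e1 : ∑ k ∈ S, (m.choose (S.erase k).card) •
            (d k (symFF d (S.erase k) f) * symFF d (T \ S) g)
          = (m.choose c) • (symFF d S f * symFF d (T \ S) g) := by
        rw [Finset.sum_congr rfl (fun k hk => by
          rw [Finset.card_erase_of_mem hk, hc, Nat.succ_sub_one]),
          ← Finset.smul_sum, ← Finset.sum_mul, ← symFF_decomp d hSne]
      rw [e1]
      by_cases hTS : T \ S = ∅
      · have hSTeq : S = T := Finset.Subset.antisymm hST (Finset.sdiff_eq_empty_iff_subset.1 hTS)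
        have hcm : c = m := by
          have h1 : S.card = m + 1 := by rw [hSTeq, hT]
          omega
        rw [hTS, Finset.sum_empty, add_zero, hc, hcm, Nat.choose_self, Nat.choose_self]
      · have hTSne : (T \ S).Nonempty := Finset.nonempty_iff_ne_empty.2 hTS
        have e2 : ∑ k ∈ T \ S, (m.choose S.card) •
              (symFF d S f * d k (symFF d ((T \ S).erase k) g))
            = (m.choose S.card) • (symFF d S f * symFF d (T \ S) g) := by
          rw [← Finset.smul_sum, ← Finset.mul_sum, ← symFF_decomp d hTSne]
        rw [e2, hc, ← add_nsmul, ← Nat.choose_succ_succ]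


/-- **Symmetrized Leibniz rule.** Let `d₁, …, dₙ` be `R`-linear derivations of an associative
`R`-algebra `A`. Summing the composites `d_{σ(1)} ∘ ⋯ ∘ d_{σ(n)}` applied to `f * g` over all
permutations `σ` gives `∑_{S ⊆ {1,…,n}} (n choose |S|) • Σ_S(f) * Σ_{Sᶜ}(g)`, where `Σ_S(f)`
is the sum over all orderings `e` of `S` of `(d_{e(1)} ∘ ⋯ ∘ d_{e(|S|)})(f)`. -/
theorem symmetrized_leibniz {R A : Type*} [CommRing R] [Ring A] [Algebra R A]
    (n : ℕ) (d : Fin n → Module.End R A)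
    (hd : ∀ i, ∀ a b : A, d i (a * b) = d i a * b + a * d i b) (f g : A) :
    ∑ σ : Equiv.Perm (Fin n), (List.ofFn fun i => d (σ i)).prod (f * g) =
      ∑ S : Finset (Fin n), (n.choose S.card) •
        ((∑ e : Fin S.card ≃ {x // x ∈ S}, (List.ofFn fun j => d (e j).val).prod f) *
         (∑ e : Fin Sᶜ.card ≃ {x // x ∈ Sᶜ}, (List.ofFn fun j => d (e j).val).prod g)) := by
  have hP : ∀ (l : List (Fin n)) (h : A), symP d l h = (l.map d).prod h := fun _ _ => rfl
  have step1 : ∑ σ : Equiv.Perm (Fin n), (List.ofFn fun i => d (σ i)).prod (f * g)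
      = symFF d Finset.univ (f * g) := by
    rw [symFF_apply, ← sum_perm_symOrds n (fun l => symP d l (f * g))]
    refine Finset.sum_congr rfl fun σ _ => ?_
    rw [hP, List.map_ofFn]
    rfl
  rw [step1, symmetrized_leibniz_aux d hd f g n Finset.univ (Finset.card_fin n),
    Finset.powerset_univ]
  refine Finset.sum_congr rfl fun S _ => ?_
  congr 1
  · congr 1
    · rw [symFF_apply, ← sum_equiv_symOrds S (fun l => symP d l f)]
      refine Finset.sum_congr rfl fun e _ => ?_
      rw [hP, List.map_ofFn]
      rfl
    · rw [← Finset.compl_eq_univ_sdiff, symFF_apply,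
        ← sum_equiv_symOrds Sᶜ (fun l => symP d l g)]
      refine Finset.sum_congr rfl fun e _ => ?_
      rw [hP, List.map_ofFn]
      rfl
end

section
/- Let K be the field ℝ or ℂ, and let (A, μ) and (A', μ') be K-superalgebras, i.e. ℤ/2-graded K-vector spaces equipped with even K-bilinear multiplications μ : A × A → A and μ' : A' × A' → A'. For each finite-dimensional Grassmann algebra Λ, let μ̄_Λ denote the induced Λ₀-bilinear multiplication on Ā(Λ) := (Λ ⊗ A)₀ determined by μ̄_Λ(λ₁ ⊗ a₁, λ₂ ⊗ a₂) = (λ₂·λ₁) ⊗ μ(a₁, a₂), and similarly μ̄'_Λ on Ā'(Λ). For an even K-linear map f : A → A', let f̄_Λ : Ā(Λ) → Ā'(Λ) be the restriction of id_Λ ⊗ f. Then f is an algebra homomorphism (f(μ(a, b)) = μ'(f(a), f(b)) for all a, b ∈ A) if and only if for every finite-dimensional Grassmann algebra Λ the map f̄_Λ is multiplicative: f̄_Λ(μ̄_Λ(x, y)) = μ̄'_Λ(f̄_Λ(x), f̄_Λ(y)) for all x, y ∈ Ā(Λ). -/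
open TensorProduct

namespace SuperAlgebraHom

variable (K : Type) [RCLike K]

/-- The Grassmann algebra `Λₘ` on `m` generators over `K`. -/
abbrev Grass (m : ℕ) : Type :=
  ExteriorAlgebra K (Fin m → K)

/-- The `ℤ/2`-grading of the Grassmann algebra `Λₘ` into its even and odd part. -/
noncomputable def grassGrading (m : ℕ) (p : ZMod 2) : Submodule K (Grass K m) :=
  CliffordAlgebra.evenOdd (0 : QuadraticForm K (Fin m → K)) p

/-- For a `ℤ/2`-graded `K`-vector space `V` (given by its grading `gr`) and the Grassmann
algebra `Λₘ`, the even part `V̄(Λₘ) = Λ₀ ⊗ V₀ ⊕ Λ₁ ⊗ V₁` of `Λₘ ⊗ V`. -/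
noncomputable def bar (m : ℕ) {V : Type} [AddCommGroup V] [Module K V]
    (gr : ZMod 2 → Submodule K V) : Submodule K (Grass K m ⊗[K] V) :=
  ⨆ p : ZMod 2, Submodule.span K
    {x | ∃ a ∈ grassGrading K m p, ∃ v ∈ gr p, x = a ⊗ₜ[K] v}

/-- For a `K`-superalgebra `(A, μ)`, the induced `Λ₀`-bilinear multiplication `μ̄_Λ` on
`Λ ⊗ A`, determined by `μ̄_Λ(λ₁ ⊗ a₁, λ₂ ⊗ a₂) = (λ₂·λ₁) ⊗ μ(a₁, a₂)`. -/
noncomputable def barMul (m : ℕ) {A : Type} [AddCommGroup A] [Module K A]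
    (μ : A →ₗ[K] A →ₗ[K] A) :
    Grass K m ⊗[K] A →ₗ[K] Grass K m ⊗[K] A →ₗ[K] Grass K m ⊗[K] A :=
  TensorProduct.map₂ ((LinearMap.mul K (Grass K m)).flip) μ

/-- Pure tensors of matching parity lie in `bar`. -/
theorem tmul_mem_bar (m : ℕ) {V : Type} [AddCommGroup V] [Module K V]
    (gr : ZMod 2 → Submodule K V) (p : ZMod 2) {a : Grass K m}
    (ha : a ∈ grassGrading K m p) {v : V} (hv : v ∈ gr p) :
    a ⊗ₜ[K] v ∈ bar K m gr :=
  le_iSup (fun p : ZMod 2 => Submodule.span K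
    {x | ∃ a ∈ grassGrading K m p, ∃ v ∈ gr p, x = a ⊗ₜ[K] v}) p
    (Submodule.subset_span ⟨a, ha, v, hv, rfl⟩)

/-- Cancel a nonzero left tensor factor over a field. -/
theorem tmul_left_cancel {V W : Type} [AddCommGroup V] [Module K V]
    [AddCommGroup W] [Module K W] {c : V} (hc : c ≠ 0) {u w : W}
    (h : c ⊗ₜ[K] u = c ⊗ₜ[K] w) : u = w := by
  obtain ⟨φ, hφ⟩ : ∃ φ : Module.Dual K V, φ c ≠ 0 := by
    by_contra h'
    push_neg at h'
    exact hc ((Module.forall_dual_apply_eq_zero_iff K c).mp h')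
  have h2 := congrArg ((TensorProduct.lid K W).toLinearMap ∘ₗ LinearMap.rTensor W φ) h
  simp only [LinearMap.coe_comp, Function.comp_apply, LinearMap.rTensor_tmul,
    TensorProduct.lid_tmul] at h2
  exact smul_right_injective W hφ h2

theorem ι_mul_ι_ne_zero :
    (ExteriorAlgebra.ι K (Pi.single 1 1 : Fin 2 → K)) *
      ExteriorAlgebra.ι K (Pi.single 0 1) ≠ 0 := by
  intro h
  have h2 : ExteriorAlgebra.ιMulti K 2 ![(Pi.single 1 1 : Fin 2 → K), Pi.single 0 1] = 0 := by
    rw [ExteriorAlgebra.ιMulti_apply]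
    simpa [List.ofFn_succ] using h
  let f : ∀ i : ℕ, (Fin 2 → K) [⋀^Fin i]→ₗ[K] K := fun i =>
    match i with
    | 2 => Matrix.detRowAlternating
    | _ => 0
  have h3 := congrArg (ExteriorAlgebra.liftAlternating f) h2
  rw [ExteriorAlgebra.liftAlternating_apply_ιMulti, map_zero] at h3
  have h4 : Matrix.det (Matrix.of ![(Pi.single 1 1 : Fin 2 → K), Pi.single 0 1]) = 0 := h3
  rw [Matrix.det_fin_two] at h4
  simp [Matrix.of_apply, Pi.single_apply] at h4

variable {A A' : Type} [AddCommGroup A] [Module K A] [AddCommGroup A'] [Module K A']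
  (grA : ZMod 2 → Submodule K A) (grA' : ZMod 2 → Submodule K A')
  [DirectSum.Decomposition grA] [DirectSum.Decomposition grA']

/-- **An even linear map between superalgebras is multiplicative iff all its Grassmann-point
extensions are.** Let `(A, μ)` and `(A', μ')` be `K`-superalgebras (`K = ℝ` or `ℂ`) and let
`f : A → A'` be an even `K`-linear map.  Then `f` is an algebra homomorphism if and only if
for every finite-dimensional Grassmann algebra `Λ` the induced map
`f̄_Λ = (id_Λ ⊗ f)|_{Ā(Λ)} : Ā(Λ) → Ā'(Λ)` is multiplicative for the induced
multiplications `μ̄_Λ`, `μ̄'_Λ`. -/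
theorem algHom_iff_barMultiplicative
    (μ : A →ₗ[K] A →ₗ[K] A) (μ' : A' →ₗ[K] A' →ₗ[K] A')
    (hμ : ∀ p q : ZMod 2, ∀ a ∈ grA p, ∀ b ∈ grA q, μ a b ∈ grA (p + q))
    (hμ' : ∀ p q : ZMod 2, ∀ a ∈ grA' p, ∀ b ∈ grA' q, μ' a b ∈ grA' (p + q))
    (f : A →ₗ[K] A') (hf : ∀ p : ZMod 2, ∀ a ∈ grA p, f a ∈ grA' p) :
    (∀ a b : A, f (μ a b) = μ' (f a) (f b)) ↔
      ∀ m : ℕ, ∀ x ∈ bar K m grA, ∀ y ∈ bar K m grA,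
        TensorProduct.map LinearMap.id f (barMul K m μ x y) =
          barMul K m μ' (TensorProduct.map LinearMap.id f x)
            (TensorProduct.map LinearMap.id f y) := by
  constructor
  · -- forward: holds on all of `Λ ⊗ A`, by bilinearity
    intro h m x _ y _
    clear * - h
    induction x using TensorProduct.induction_on with
    | zero => simp
    | add x₁ x₂ h₁ h₂ => simp only [map_add, LinearMap.add_apply, h₁, h₂]
    | tmul a v =>
      induction y using TensorProduct.induction_on with
      | zero => simp
      | add y₁ y₂ h₁ h₂ => simp only [map_add, h₁, h₂]
      | tmul b w =>
        simp [barMul, TensorProduct.map₂_apply_tmul, TensorProduct.map_tmul,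
          LinearMap.flip_apply, LinearMap.mul_apply', h]
  · intro h
    -- the homogeneous case, tested on the Grassmann algebra `Λ₂`
    have key : ∀ p q : ZMod 2, ∀ a ∈ grA p, ∀ b ∈ grA q,
        f (μ a b) = μ' (f a) (f b) := by
      intro p q a ha b hb
      -- choose homogeneous Grassmann elements of parities `p` and `q`
      set e₀ : Fin 2 → K := Pi.single 0 1 with he₀
      set e₁ : Fin 2 → K := Pi.single 1 1 with he₁
      have hone : (1 : Grass K 2) ∈ grassGrading K 2 0 :=
        Submodule.one_le.mp (CliffordAlgebra.one_le_evenOdd_zero _)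
      have hι : ∀ v : Fin 2 → K, ExteriorAlgebra.ι K v ∈ grassGrading K 2 1 :=
        fun v => CliffordAlgebra.ι_mem_evenOdd_one _ v
      have hιne : ∀ i : Fin 2, ExteriorAlgebra.ι K (Pi.single i 1 : Fin 2 → K) ≠ 0 := by
        intro i hi
        rw [ExteriorAlgebra.ι_eq_zero_iff] at hi
        exact one_ne_zero (α := K) (by simpa using congrFun hi i)
      obtain ⟨lp, hlp, hlpne, hlpne'⟩ :
          ∃ l : Grass K 2, l ∈ grassGrading K 2 p ∧ l ≠ 0 ∧
            ∀ l' ∈ ({1, ExteriorAlgebra.ι K e₁} : Set (Grass K 2)), l' * l ≠ 0 := by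
        fin_cases p
        · exact ⟨1, hone, one_ne_zero, by rintro l' (rfl | rfl) <;> simpa [he₁] using hιne 1⟩
        · refine ⟨ExteriorAlgebra.ι K e₀, hι e₀, hιne 0, ?_⟩
          rintro l' (rfl | rfl)
          · simpa [he₀] using hιne 0
          · exact ι_mul_ι_ne_zero K
      obtain ⟨lq, hlq, hlqmem⟩ :
          ∃ l : Grass K 2, l ∈ grassGrading K 2 q ∧
            l ∈ ({1, ExteriorAlgebra.ι K e₁} : Set (Grass K 2)) := by
        fin_cases q
        · exact ⟨1, hone, Or.inl rfl⟩
        · exact ⟨ExteriorAlgebra.ι K e₁, hι e₁, Or.inr rfl⟩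
      have hc : lq * lp ≠ 0 := hlpne' lq hlqmem
      have heq := h 2 (lp ⊗ₜ[K] a) (tmul_mem_bar K 2 grA p hlp ha)
        (lq ⊗ₜ[K] b) (tmul_mem_bar K 2 grA q hlq hb)
      simp only [barMul, TensorProduct.map₂_apply_tmul, TensorProduct.map_tmul,
        LinearMap.flip_apply, LinearMap.mul_apply', LinearMap.id_coe, id_eq] at heq
      exact tmul_left_cancel K hc heq
    -- extend to all of `A` by the direct sum decomposition
    intro a b
    classical
    conv_lhs => rw [← DirectSum.sum_support_decompose grA a,
      ← DirectSum.sum_support_decompose grA b]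
    conv_rhs => rw [← DirectSum.sum_support_decompose grA a,
      ← DirectSum.sum_support_decompose grA b]
    simp only [map_sum, LinearMap.sum_apply]
    refine Finset.sum_congr rfl fun p _ => Finset.sum_congr rfl fun q _ =>
      key q p _ (SetLike.coe_mem _) _ (SetLike.coe_mem _)

end SuperAlgebraHom
end

section
/- Let K be a field, n ∈ ℕ, and let ε : Λₙ → K be the augmentation of the Grassmann algebra Λₙ on n generators (the unique K-algebra homomorphism sending every generator θᵢ to 0; in Lean: ExteriorAlgebra.algebraMapInv). Then an element x ∈ Λₙ is a unit if and only if ε(x) ≠ 0. -/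
open ExteriorAlgebra

section Aux

variable (K : Type*) [Field K] (n : ℕ)

local notation "Λ" => ExteriorAlgebra K (Fin n → K)

/-- The top-degree-plus-one exterior power of `K^n` vanishes. -/
lemma grassmann_power_top_eq_bot :
    (LinearMap.range (ι K : (Fin n → K) →ₗ[K] Λ)) ^ (n + 1) = ⊥ := by
  have h : (LinearMap.range (ι K : (Fin n → K) →ₗ[K] Λ)) ^ (n + 1)
      = ⋀[K]^(n+1) (Fin n → K) := rfl
  rw [h, ← ExteriorAlgebra.ιMulti_span_fixedDegree K (n + 1), Submodule.span_eq_bot]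
  rintro _ ⟨v, rfl⟩
  apply AlternatingMap.map_linearDependent
  intro h
  have := h.fintype_card_le_finrank
  simp [Module.finrank_fintype_fun_eq_card] at this

/-- The augmentation ideal as a submodule: the supremum of positive-degree parts. -/
noncomputable def grassmannAug : Submodule K Λ :=
  ⨆ i : ℕ, (LinearMap.range (ι K : (Fin n → K) →ₗ[K] Λ)) ^ (i + 1)

lemma grassmannAug_mul_le :
    grassmannAug K n * grassmannAug K n ≤ grassmannAug K n := by
  rw [grassmannAug, Submodule.iSup_mul]
  refine iSup_le fun i => ?_
  rw [Submodule.mul_iSup]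
  refine iSup_le fun j => ?_
  rw [← pow_add]
  exact le_iSup_of_le (i + 1 + j) (by rw [show i + 1 + (j + 1) = i + 1 + j + 1 by ring])

lemma grassmannAug_pow_le (k : ℕ) :
    grassmannAug K n ^ (k + 1) ≤
      ⨆ i : ℕ, (LinearMap.range (ι K : (Fin n → K) →ₗ[K] Λ)) ^ (i + (k + 1)) := by
  induction k with
  | zero => rw [pow_one, grassmannAug]
  | succ k ih =>
    rw [pow_succ]
    calc grassmannAug K n ^ (k + 1) * grassmannAug K n
        ≤ (⨆ i : ℕ, (LinearMap.range (ι K : (Fin n → K) →ₗ[K] Λ)) ^ (i + (k + 1))) *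
            grassmannAug K n := mul_le_mul' ih le_rfl
      _ ≤ _ := by
          rw [Submodule.iSup_mul]
          refine iSup_le fun i => ?_
          rw [grassmannAug, Submodule.mul_iSup]
          refine iSup_le fun j => ?_
          rw [← pow_add]
          refine le_iSup_of_le (i + j) (le_of_eq ?_)
          rw [show i + (k + 1) + (j + 1) = i + j + (k + 1 + 1) by ring]

lemma grassmannAug_nilpotent {t : Λ} (ht : t ∈ grassmannAug K n) :
    t ^ (n + 1) = 0 := by
  have h1 : t ^ (n + 1) ∈ grassmannAug K n ^ (n + 1) := Submodule.pow_mem_pow _ ht _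
  have h2 : grassmannAug K n ^ (n + 1) ≤ ⊥ := by
    refine (grassmannAug_pow_le K n n).trans ?_
    refine iSup_le fun i => ?_
    rw [show i + (n + 1) = (n + 1) + i by ring, pow_add, grassmann_power_top_eq_bot,
      Submodule.bot_mul]
  simpa using h2 h1

lemma grassmann_decomp (x : Λ) :
    x - algebraMap K Λ (algebraMapInv x) ∈ grassmannAug K n := by
  have hsmul : ∀ (r : K) (y : Λ), y * algebraMap K Λ r = r • y := fun r y => by
    rw [← Algebra.commutes, ← Algebra.smul_def]
  induction x using ExteriorAlgebra.induction with
  | algebraMap r => simp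
  | ι m =>
    have h : (algebraMapInv : Λ →ₐ[K] K) (ι K m) = 0 := by
      simp [ExteriorAlgebra.algebraMapInv, ExteriorAlgebra.lift_ι_apply]
    rw [h, map_zero, sub_zero]
    refine Submodule.mem_iSup_of_mem 0 ?_
    rw [zero_add, pow_one]
    exact LinearMap.mem_range_self _ m
  | add a b ha hb =>
    rw [map_add, map_add, add_sub_add_comm]
    exact Submodule.add_mem _ ha hb
  | mul a b ha hb =>
    have key : a * b - algebraMap K Λ (algebraMapInv (a * b)) =
        (algebraMapInv a) • (b - algebraMap K Λ (algebraMapInv b)) +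
        (a - algebraMap K Λ (algebraMapInv a)) * algebraMap K Λ (algebraMapInv b) +
        (a - algebraMap K Λ (algebraMapInv a)) * (b - algebraMap K Λ (algebraMapInv b)) := by
      rw [map_mul, map_mul]
      simp only [Algebra.smul_def, mul_sub, sub_mul]
      abel
    rw [key, hsmul]
    exact Submodule.add_mem _
      (Submodule.add_mem _ (Submodule.smul_mem _ _ hb) (Submodule.smul_mem _ _ ha))
      (grassmannAug_mul_le K n (Submodule.mul_mem_mul ha hb))

end Aux

/-- An element of the Grassmann algebra `Λₙ = ExteriorAlgebra K (Fin n → K)` over a field `K`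
is a unit if and only if its augmentation (the image under the unique `K`-algebra homomorphism
killing all generators) is nonzero. -/
theorem grassmann_isUnit_iff (K : Type*) [Field K] (n : ℕ)
    (x : ExteriorAlgebra K (Fin n → K)) :
    IsUnit x ↔ ExteriorAlgebra.algebraMapInv x ≠ 0 := by
  constructor
  · intro hx
    have := hx.map (ExteriorAlgebra.algebraMapInv :
      ExteriorAlgebra K (Fin n → K) →ₐ[K] K)
    exact this.ne_zero
  · intro hx
    set a := ExteriorAlgebra.algebraMapInv x with ha
    have hdec := grassmann_decomp K n x
    have hnil : IsNilpotent (x - algebraMap K _ a) :=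
      ⟨n + 1, grassmannAug_nilpotent K n hdec⟩
    have hu : IsUnit (algebraMap K (ExteriorAlgebra K (Fin n → K)) a) :=
      (isUnit_iff_ne_zero.mpr hx).map (algebraMap K _)
    have := hnil.isUnit_add_right_of_commute hu (Algebra.commute_algebraMap_left a _).symm
    simpa using this
end
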